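/- Let $A$ be the commutative $\mathbb{F}$-algebra generated by $a_1,a_2,a_3,a_4$, $x_1,\dots,x_5$, and $\rho_{ij}$ ($1\le i<j\le 4$), modulo the relations $\rho_{12}\rho_{23}=0$, $\rho_{12}\rho_{24}+\rho_{13}\rho_{34}=0$, $\rho_{23}\rho_{34}=0$, $1+\rho_{12}a_1=0$, $1+a_1a_2=0$, $1+a_2a_3=0$, $1+a_3a_4=0$, $1+a_4\rho_{34}=0$. Then $\rho_{12}=a_2=a_4$, $a_1=a_3=\rho_{34}$, $\rho_{12}\rho_{34}=1$, and $A \cong \mathbb{F}[x_1,\dots,x_5]\otimes_{\mathbb{F}}\left(\mathcal{C}'(I_4)/\langle\rho_{12}\rho_{34}=1\rangle\right)$. -/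

import Mathlib

open MvPolynomial

/-- Generators of the abelianized characteristic algebra `𝒞'(3S̃)` of three concatenated
S tangles: crossings `a₁,…,a₄`, `x₁,…,x₅` and the `ρ_{ij}`. -/
inductive TGen | a1 | a2 | a3 | a4 | x1 | x2 | x3 | x4 | x5 | r12 | r13 | r14 | r23 | r24 | r34

/-- Generators `ρ_{ij}`, `1 ≤ i < j ≤ 4`, of `𝒞'(I₄)`. -/
inductive RhoGen | r12 | r13 | r14 | r23 | r24 | r34

/-- `𝒞'(I₄)/⟨ρ₁₂ρ₃₄ = 1⟩`. -/
noncomputable abbrev CI4R : Type :=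
  MvPolynomial RhoGen (ZMod 2) ⧸ Ideal.span
    ({X RhoGen.r12 * X RhoGen.r23,
      X RhoGen.r12 * X RhoGen.r24 + X RhoGen.r13 * X RhoGen.r34,
      X RhoGen.r23 * X RhoGen.r34,
      X RhoGen.r12 * X RhoGen.r34 - 1} : Set (MvPolynomial RhoGen (ZMod 2)))

/-- The relations of `𝒞'(3S̃)`. -/
noncomputable def TRel : Set (MvPolynomial TGen (ZMod 2)) :=
  {X TGen.r12 * X TGen.r23,
   X TGen.r12 * X TGen.r24 + X TGen.r13 * X TGen.r34,
   X TGen.r23 * X TGen.r34,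
   1 + X TGen.r12 * X TGen.a1,
   1 + X TGen.a1 * X TGen.a2,
   1 + X TGen.a2 * X TGen.a3,
   1 + X TGen.a3 * X TGen.a4,
   1 + X TGen.a4 * X TGen.r34}

-- two = 0 in any ZMod 2 algebra
theorem two_eq_zero' (R : Type*) [CommRing R] [Algebra (ZMod 2) R] : (2 : R) = 0 := by
  have h : (2 : R) = algebraMap (ZMod 2) R 2 := (map_ofNat (algebraMap (ZMod 2) R) 2).symm
  rw [h, show (2 : ZMod 2) = 0 from rfl, map_zero]

noncomputable section

abbrev JRho : Ideal (MvPolynomial RhoGen (ZMod 2)) := Ideal.span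
    ({X RhoGen.r12 * X RhoGen.r23,
      X RhoGen.r12 * X RhoGen.r24 + X RhoGen.r13 * X RhoGen.r34,
      X RhoGen.r23 * X RhoGen.r34,
      X RhoGen.r12 * X RhoGen.r34 - 1} : Set (MvPolynomial RhoGen (ZMod 2)))

abbrev qR : MvPolynomial RhoGen (ZMod 2) →ₐ[ZMod 2] CI4R := Ideal.Quotient.mkₐ (ZMod 2) JRho

def qT : MvPolynomial TGen (ZMod 2) →ₐ[ZMod 2] (MvPolynomial TGen (ZMod 2) ⧸ Ideal.span TRel) :=
  Ideal.Quotient.mkₐ (ZMod 2) (Ideal.span TRel)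

abbrev Tgt := TensorProduct (ZMod 2) (MvPolynomial (Fin 5) (ZMod 2)) CI4R

open scoped TensorProduct in
def fwdGen : TGen → Tgt
  | .a1 => 1 ⊗ₜ qR (X RhoGen.r34)
  | .a2 => 1 ⊗ₜ qR (X RhoGen.r12)
  | .a3 => 1 ⊗ₜ qR (X RhoGen.r34)
  | .a4 => 1 ⊗ₜ qR (X RhoGen.r12)
  | .x1 => (X 0 : MvPolynomial (Fin 5) (ZMod 2)) ⊗ₜ 1
  | .x2 => (X 1 : MvPolynomial (Fin 5) (ZMod 2)) ⊗ₜ 1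
  | .x3 => (X 2 : MvPolynomial (Fin 5) (ZMod 2)) ⊗ₜ 1
  | .x4 => (X 3 : MvPolynomial (Fin 5) (ZMod 2)) ⊗ₜ 1
  | .x5 => (X 4 : MvPolynomial (Fin 5) (ZMod 2)) ⊗ₜ 1
  | .r12 => 1 ⊗ₜ qR (X RhoGen.r12)
  | .r13 => 1 ⊗ₜ qR (X RhoGen.r13)
  | .r14 => 1 ⊗ₜ qR (X RhoGen.r14)
  | .r23 => 1 ⊗ₜ qR (X RhoGen.r23)
  | .r24 => 1 ⊗ₜ qR (X RhoGen.r24)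
  | .r34 => 1 ⊗ₜ qR (X RhoGen.r34)

def fwd : MvPolynomial TGen (ZMod 2) →ₐ[ZMod 2] Tgt := aeval fwdGen

def bwdGen : RhoGen → (MvPolynomial TGen (ZMod 2) ⧸ Ideal.span TRel)
  | .r12 => qT (X TGen.r12)
  | .r13 => qT (X TGen.r13)
  | .r14 => qT (X TGen.r14)
  | .r23 => qT (X TGen.r23)
  | .r24 => qT (X TGen.r24)
  | .r34 => qT (X TGen.r34)

def xg : Fin 5 → TGen := ![TGen.x1, TGen.x2, TGen.x3, TGen.x4, TGen.x5]

example : True := trivial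

abbrev AQ := MvPolynomial TGen (ZMod 2) ⧸ Ideal.span TRel

lemma qT_rel {p : MvPolynomial TGen (ZMod 2)} (hp : p ∈ TRel) : qT p = 0 := by
  simp only [qT, Ideal.Quotient.mkₐ_eq_mk, Ideal.Quotient.eq_zero_iff_mem]
  exact Ideal.subset_span hp

lemma e4 : (1 : AQ) + qT (X TGen.r12) * qT (X TGen.a1) = 0 := by
  have := qT_rel (p := 1 + X TGen.r12 * X TGen.a1) (by simp [TRel]); simpa using this
lemma e5 : (1 : AQ) + qT (X TGen.a1) * qT (X TGen.a2) = 0 := by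
  have := qT_rel (p := 1 + X TGen.a1 * X TGen.a2) (by simp [TRel]); simpa using this
lemma e6 : (1 : AQ) + qT (X TGen.a2) * qT (X TGen.a3) = 0 := by
  have := qT_rel (p := 1 + X TGen.a2 * X TGen.a3) (by simp [TRel]); simpa using this
lemma e7 : (1 : AQ) + qT (X TGen.a3) * qT (X TGen.a4) = 0 := by
  have := qT_rel (p := 1 + X TGen.a3 * X TGen.a4) (by simp [TRel]); simpa using this
lemma e8 : (1 : AQ) + qT (X TGen.a4) * qT (X TGen.r34) = 0 := by
  have := qT_rel (p := 1 + X TGen.a4 * X TGen.r34) (by simp [TRel]); simpa using this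

lemma id1 : qT (X TGen.r12) = qT (X TGen.a2) := by
  linear_combination (qT (X TGen.r12)) * e5 - (qT (X TGen.a2)) * e4
lemma id2 : qT (X TGen.a2) = qT (X TGen.a4) := by
  linear_combination (qT (X TGen.a2)) * e7 - (qT (X TGen.a4)) * e6
lemma id3 : qT (X TGen.a1) = qT (X TGen.a3) := by
  linear_combination (qT (X TGen.a1)) * e6 - (qT (X TGen.a3)) * e5
lemma id4 : qT (X TGen.a3) = qT (X TGen.r34) := by
  linear_combination (qT (X TGen.a3)) * e8 - (qT (X TGen.r34)) * e7
lemma id5 : qT (X TGen.r12) * qT (X TGen.r34) = 1 := by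
  have h2 := two_eq_zero' AQ
  rw [id1, ← id4]
  linear_combination (-1 : AQ) * e6 + (qT (X TGen.a2) * qT (X TGen.a3)) * h2

lemma qR_rel {p : MvPolynomial RhoGen (ZMod 2)}
    (hp : p ∈ ({X RhoGen.r12 * X RhoGen.r23,
      X RhoGen.r12 * X RhoGen.r24 + X RhoGen.r13 * X RhoGen.r34,
      X RhoGen.r23 * X RhoGen.r34,
      X RhoGen.r12 * X RhoGen.r34 - 1} : Set (MvPolynomial RhoGen (ZMod 2)))) : qR p = 0 := by
  show Ideal.Quotient.mkₐ (ZMod 2) JRho p = 0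
  rw [Ideal.Quotient.mkₐ_eq_mk, Ideal.Quotient.eq_zero_iff_mem]
  exact Ideal.subset_span hp

lemma qR_1234 : qR (X RhoGen.r12) * qR (X RhoGen.r34) = 1 := by
  have h := qR_rel (p := X RhoGen.r12 * X RhoGen.r34 - 1) (by simp)
  rw [map_sub, map_mul, map_one, sub_eq_zero] at h
  exact h

lemma one_plus_1234 : qR (1 + X RhoGen.r12 * X RhoGen.r34) = 0 := by
  have h2 := two_eq_zero' (MvPolynomial RhoGen (ZMod 2))
  have : (1 : MvPolynomial RhoGen (ZMod 2)) + X RhoGen.r12 * X RhoGen.r34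
      = X RhoGen.r12 * X RhoGen.r34 - 1 := by linear_combination h2
  rw [this]
  exact qR_rel (by simp)

abbrev F5 := MvPolynomial (Fin 5) (ZMod 2)

lemma one_plus_3412 : qR (1 + X RhoGen.r34 * X RhoGen.r12) = 0 := by
  have h : (1 : MvPolynomial RhoGen (ZMod 2)) + X RhoGen.r34 * X RhoGen.r12
      = 1 + X RhoGen.r12 * X RhoGen.r34 := by ring
  rw [h]; exact one_plus_1234

open scoped TensorProduct

lemma key1 (r s : RhoGen) (h : qR (1 + X r * X s) = 0) :
    (1 : Tgt) + ((1 : F5) ⊗ₜ[ZMod 2] qR (X r)) * ((1 : F5) ⊗ₜ[ZMod 2] qR (X s)) = 0 := by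
  rw [Algebra.TensorProduct.tmul_mul_tmul, one_mul, ← map_mul,
    show (1 : Tgt) = (1 : F5) ⊗ₜ[ZMod 2] (1 : CI4R) from rfl, ← map_one qR,
    ← TensorProduct.tmul_add, ← map_add, h, TensorProduct.tmul_zero]

lemma key2 (r s : RhoGen) (h : qR (X r * X s) = 0) :
    ((1 : F5) ⊗ₜ[ZMod 2] qR (X r)) * ((1 : F5) ⊗ₜ[ZMod 2] qR (X s)) = 0 := by
  rw [Algebra.TensorProduct.tmul_mul_tmul, one_mul, ← map_mul, h, TensorProduct.tmul_zero]

lemma key3 (r s u v : RhoGen) (h : qR (X r * X s + X u * X v) = 0) :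
    ((1 : F5) ⊗ₜ[ZMod 2] qR (X r)) * ((1 : F5) ⊗ₜ[ZMod 2] qR (X s)) +
    ((1 : F5) ⊗ₜ[ZMod 2] qR (X u)) * ((1 : F5) ⊗ₜ[ZMod 2] qR (X v)) = 0 := by
  rw [Algebra.TensorProduct.tmul_mul_tmul, one_mul, Algebra.TensorProduct.tmul_mul_tmul,
    one_mul, ← TensorProduct.tmul_add, ← map_mul, ← map_mul, ← map_add, h,
    TensorProduct.tmul_zero]

lemma fwd_ker : ∀ p ∈ Ideal.span TRel, fwd p = 0 := by
  intro p hp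
  refine (RingHom.mem_ker (f := fwd)).1 ?_
  refine Ideal.span_le.2 ?_ hp
  intro q hq
  rw [SetLike.mem_coe, RingHom.mem_ker]
  simp only [TRel, Set.mem_insert_iff, Set.mem_singleton_iff] at hq
  rcases hq with h|h|h|h|h|h|h|h <;> subst h <;>
    simp only [fwd, map_add, map_mul, map_one, aeval_X, fwdGen]
  · exact key2 _ _ (qR_rel (by simp))
  · exact key3 _ _ _ _ (qR_rel (by simp))
  · exact key2 _ _ (qR_rel (by simp))
  · exact (congrArg (· + _) (map_one (aeval fwdGen).toRingHom)).trans (key1 _ _ one_plus_1234)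
  · exact (congrArg (· + _) (map_one (aeval fwdGen).toRingHom)).trans (key1 _ _ one_plus_3412)
  · exact (congrArg (· + _) (map_one (aeval fwdGen).toRingHom)).trans (key1 _ _ one_plus_1234)
  · exact (congrArg (· + _) (map_one (aeval fwdGen).toRingHom)).trans (key1 _ _ one_plus_3412)
  · exact (congrArg (· + _) (map_one (aeval fwdGen).toRingHom)).trans (key1 _ _ one_plus_1234)

lemma bwd_ker : ∀ p ∈ JRho, aeval (R := ZMod 2) bwdGen p = 0 := by
  intro p hp
  rw [← RingHom.mem_ker]
  refine Ideal.span_le.2 ?_ hp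
  intro q hq
  rw [SetLike.mem_coe, RingHom.mem_ker]
  simp only [Set.mem_insert_iff, Set.mem_singleton_iff] at hq
  rcases hq with h|h|h|h <;> subst h <;>
    simp only [map_add, map_mul, map_sub, map_one, aeval_X, bwdGen]
  · rw [← map_mul]; exact qT_rel (by simp [TRel])
  · rw [← map_mul, ← map_mul, ← map_add]; exact qT_rel (by simp [TRel])
  · rw [← map_mul]; exact qT_rel (by simp [TRel])
  · rw [id5, sub_self]

def Φ : AQ →ₐ[ZMod 2] Tgt := Ideal.Quotient.liftₐ (Ideal.span TRel) fwd fwd_ker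

def ψ1 : F5 →ₐ[ZMod 2] AQ := aeval (fun i => qT (X (xg i)))

def ψ2 : CI4R →ₐ[ZMod 2] AQ := Ideal.Quotient.liftₐ JRho (aeval bwdGen) bwd_ker

def Ψ : Tgt →ₐ[ZMod 2] AQ := Algebra.TensorProduct.productMap ψ1 ψ2

lemma Φ_qT (p : MvPolynomial TGen (ZMod 2)) : Φ (qT p) = fwd p := rfl
lemma Φ_mk (p : MvPolynomial TGen (ZMod 2)) : Φ (Ideal.Quotient.mk (Ideal.span TRel) p) = fwd p := rfl
lemma ψ2_mk (p : MvPolynomial RhoGen (ZMod 2)) : ψ2 (Ideal.Quotient.mk JRho p) = aeval bwdGen p := rfl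

lemma comp1 : Φ.comp Ψ = AlgHom.id (ZMod 2) Tgt := by
  apply Algebra.TensorProduct.ext
  · apply MvPolynomial.algHom_ext
    intro i
    fin_cases i <;>
      simp [Ψ, Φ_qT, ψ1, fwd, xg, fwdGen, Ideal.Quotient.liftₐ_apply,
        Algebra.TensorProduct.includeLeft_apply]
  · apply Ideal.Quotient.algHom_ext
    apply MvPolynomial.algHom_ext
    intro g
    cases g <;>
      simp [Ψ, Φ_qT, ψ2_mk, fwd, bwdGen, fwdGen, Ideal.Quotient.liftₐ_apply,
        Algebra.TensorProduct.includeRight_apply]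

lemma comp2 : Ψ.comp Φ = AlgHom.id (ZMod 2) AQ := by
  apply Ideal.Quotient.algHom_ext
  apply MvPolynomial.algHom_ext
  intro g
  cases g <;>
    simp [Φ_qT, Φ_mk, Ψ, ψ1, ψ2_mk, Ideal.Quotient.liftₐ_apply, Ideal.Quotient.lift_mk, fwd, aeval_X,
      fwdGen, Algebra.TensorProduct.productMap_apply_tmul, bwdGen, xg, qT]
  · exact (id3.trans id4).symm
  · exact id1
  · exact id4.symm
  · exact id1.trans id2

end

/-- in `A = 𝒞'(3S̃)` we have `ρ₁₂ = a₂ = a₄`, `a₁ = a₃ = ρ₃₄`, and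
`ρ₁₂ρ₃₄ = 1`, and `A ≅ 𝔽[x₁,…,x₅] ⊗ (𝒞'(I₄)/⟨ρ₁₂ρ₃₄ = 1⟩)`. -/
theorem characteristic_algebra_3S :
    letI π := Ideal.Quotient.mk (Ideal.span TRel)
    π (X TGen.r12) = π (X TGen.a2) ∧
    π (X TGen.a2) = π (X TGen.a4) ∧
    π (X TGen.a1) = π (X TGen.a3) ∧
    π (X TGen.a3) = π (X TGen.r34) ∧
    π (X TGen.r12 * X TGen.r34) = 1 ∧
    Nonempty ((MvPolynomial TGen (ZMod 2) ⧸ Ideal.span TRel) ≃ₐ[ZMod 2]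
      TensorProduct (ZMod 2) (MvPolynomial (Fin 5) (ZMod 2)) CI4R) := by
  refine ⟨id1, id2, id3, id4, ?_, ⟨AlgEquiv.ofAlgHom Φ Ψ comp1 comp2⟩⟩
  rw [map_mul]
  exact id5
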